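/- Let (s_n)_{n≥1} be a strictly increasing sequence of positive integers (the markers) and let p ≤ q be positive integers. Then there exists a sequence of consecutive intervals I_1 = [s_{i_1}, s_{i_2} − 1], I_2 = [s_{i_2}, s_{i_3} − 1], …, I_v = [s_{i_v}, s_{i_{v+1}} − 1], all belonging to 𝒞̃, such that i_1 = p, i_v ≤ q < i_{v+1}, and v ≤ ⌈log₂(q − p + 2)⌉. -/

import Mathlib

lemma cpgc_val_step {n : ℕ} (hn : 1 ≤ n) :
    padicValNat 2 n < padicValNat 2 (n + 2 ^ padicValNat 2 n) := by
  haveI : Fact (Nat.Prime 2) := ⟨Nat.prime_two⟩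
  set a := padicValNat 2 n with ha
  have h2 : ¬ 2 ^ (a + 1) ∣ n := pow_succ_padicValNat_not_dvd (by omega)
  obtain ⟨m, hm⟩ := (pow_padicValNat_dvd : 2 ^ a ∣ n)
  have hmodd : ¬ 2 ∣ m := by
    rintro ⟨t, ht⟩
    exact h2 ⟨t, by rw [hm, ht]; ring⟩
  have hdvd : 2 ^ (a + 1) ∣ n + 2 ^ a := by
    have h3 : 2 ∣ m + 1 := by omega
    obtain ⟨t, ht⟩ := h3
    exact ⟨t, by rw [hm]; ring_nf; nlinarith [ht, pow_pos (by norm_num : (0:ℕ) < 2) a]⟩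
  have := (padicValNat_dvd_iff_le (p := 2) (a := n + 2 ^ a) (n := a + 1) (by positivity)).mp hdvd
  omega

/-- Lemma 8: given a strictly increasing sequence of positive-integer markers `sm`, with the
compact problem-dependent geometric covering intervals
`𝒞̃ = ∪_k { [sm (i·2^k), sm ((i+1)·2^k) − 1] : i odd }`, every marker interval `[sm p, sm q]`
can be covered by consecutive CPGC intervals `I_k = [sm (idx k), sm (idx (k+1)) − 1] ∈ 𝒞̃`
(the interval `[sm a, sm b − 1]` belongs to `𝒞̃` iff `b = a + 2 ^ padicValNat 2 a`), with
`idx 1 = p`, `idx v ≤ q < idx (v+1)` and `v ≤ ⌈log₂(q − p + 2)⌉`. -/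
theorem stmt_14 (sm : ℕ → ℕ) (hsm : StrictMono sm) (hsm_pos : ∀ n, 1 ≤ n → 1 ≤ sm n)
    (p q : ℕ) (hp : 1 ≤ p) (hpq : p ≤ q) :
    ∃ (v : ℕ) (idx : ℕ → ℕ), 1 ≤ v ∧ idx 1 = p ∧
      (∀ k, 1 ≤ k → k ≤ v → idx (k + 1) = idx k + 2 ^ padicValNat 2 (idx k)) ∧
      idx v ≤ q ∧ q < idx (v + 1) ∧
      v ≤ Nat.clog 2 (q - p + 2) := by
  clear hsm hsm_pos
  set f : ℕ → ℕ := fun n => n + 2 ^ padicValNat 2 n with hf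
  set g : ℕ → ℕ := fun k => f^[k] p with hg
  have hgsucc : ∀ k, g (k + 1) = g k + 2 ^ padicValNat 2 (g k) := by
    intro k
    simp only [hg, Function.iterate_succ_apply']
    rfl
  have hgpos : ∀ k, 1 ≤ g k := by
    intro k
    induction k with
    | zero => exact hp
    | succ k ih => rw [hgsucc]; exact ih.trans (Nat.le_add_right _ _)
  have hval : ∀ k, k ≤ padicValNat 2 (g k) := by
    intro k
    induction k with
    | zero => exact Nat.zero_le _
    | succ k ih =>
      have := cpgc_val_step (hgpos k)
      rw [hgsucc]
      omega
  have hlb : ∀ k, p + 2 ^ k ≤ g k + 1 := by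
    intro k
    induction k with
    | zero => simp [hg]
    | succ k ih =>
      have h1 := hgsucc k
      have h2 : 2 ^ k ≤ 2 ^ padicValNat 2 (g k) :=
        Nat.pow_le_pow_right (by norm_num) (hval k)
      have : (2:ℕ) ^ (k + 1) = 2 ^ k + 2 ^ k := by ring
      omega
  have hex : ∃ k, q < g (k + 1) := by
    refine ⟨q, ?_⟩
    have := hlb (q + 1)
    have : q + 1 < 2 ^ (q + 1) := Nat.lt_two_pow_self
    omega
  set m := Nat.find hex with hm
  have hspec : q < g (m + 1) := Nat.find_spec hex
  refine ⟨m + 1, fun k => g (k - 1), by omega, by simp [hg], ?_, ?_, ?_, ?_⟩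
  · intro k hk1 _
    simp only []
    have h : k + 1 - 1 = (k - 1) + 1 := by omega
    rw [h, hgsucc]
  · -- g m ≤ q
    show g (m + 1 - 1) ≤ q
    simp only [Nat.add_sub_cancel]
    rcases Nat.eq_zero_or_pos m with h0 | hpos
    · simpa [h0, hg] using hpq
    · have := Nat.find_min hex (show m - 1 < m by omega)
      have heq : m - 1 + 1 = m := by omega
      rw [heq] at this
      omega
  · show q < g (m + 1 + 1 - 1)
    simpa using hspec
  · -- m + 1 ≤ clog 2 (q - p + 2)
    have hgmq : g m ≤ q := by
      rcases Nat.eq_zero_or_pos m with h0 | hpos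
      · simpa [h0, hg] using hpq
      · have := Nat.find_min hex (show m - 1 < m by omega)
        have heq : m - 1 + 1 = m := by omega
        rw [heq] at this
        omega
    have h1 := hlb m
    have h2 : 2 ^ m < q - p + 2 := by omega
    have h3 : q - p + 2 ≤ 2 ^ Nat.clog 2 (q - p + 2) :=
      Nat.le_pow_clog (by norm_num) _
    have h4 : (2:ℕ) ^ m < 2 ^ Nat.clog 2 (q - p + 2) := by omega
    have := (Nat.pow_lt_pow_iff_right (by norm_num : 1 < 2)).mp h4
    omega
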